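/- Let k ≥ 2, let w ∈ {right, down}^{k−1} be the step word of a stair with k boxes and let v : {0,…,k−1} → ℤ be its favorite condition. Let S = {a, a+1, …, b} be a proper nonempty interval of boxes which is a submodule substair. Then Σ_{i∈S} v(i) equals the number of internal endpoints of S: it equals 1 if exactly one of the conditions a > 0 and b < k−1 holds, and 2 if both hold. (This is the Remark computing θ_𝓕(𝓔_Γ) ∈ {1, 2} for a connected G-equivariant ℂ[x,y]-submodule of a toric G-constellation, according to whether its substair has one or two internal endpoints.) -/

import Mathlib

/-- A step of a stair: a right step `+(1,0)` or a down step `+(0,-1)`. -/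
inductive Step
  | right
  | down
deriving DecidableEq, BEq

/-- Box `i` of a stair with `k` boxes and step word `w` is a generator. -/
def IsGenBox (k : ℕ) (w : ℕ → Step) (i : ℕ) : Prop :=
  (i = 0 ∨ w (i - 1) = Step.down) ∧ (i = k - 1 ∨ w i = Step.right)

/-- Box `i` of a stair with `k` boxes and step word `w` is an antigenerator. -/
def IsAntigenBox (k : ℕ) (w : ℕ → Step) (i : ℕ) : Prop :=
  (i = 0 ∨ w (i - 1) = Step.right) ∧ (i = k - 1 ∨ w i = Step.down)

instance (k : ℕ) (w : ℕ → Step) : DecidablePred (IsGenBox k w) := fun i => by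
  unfold IsGenBox; infer_instance

instance (k : ℕ) (w : ℕ → Step) : DecidablePred (IsAntigenBox k w) := fun i => by
  unfold IsAntigenBox; infer_instance

/-- The favorite condition of the stair with `k` boxes and step word `w`. -/
def fav (k : ℕ) (w : ℕ → Step) (i : ℕ) : ℤ :=
  if IsGenBox k w i then (if i = 0 ∨ i = k - 1 then -1 else -2)
  else if IsAntigenBox k w i then (if i = 0 ∨ i = k - 1 then 1 else 2)
  else 0

/-- A subset `S` of the boxes `{0, …, k-1}` is a submodule substair. -/
def IsSubmoduleSubstair (k : ℕ) (w : ℕ → Step) (S : Finset ℕ) : Prop :=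
  S ⊆ Finset.range k ∧
  ∀ i : ℕ, i < k - 1 →
    (i ∈ S → w i = Step.right → i + 1 ∈ S) ∧
    (i + 1 ∈ S → w i = Step.down → i ∈ S)

/-- Value of a step: `+1` for right, `-1` for down. -/
def gval : Step → ℤ
  | Step.right => 1
  | Step.down => -1

lemma fav_eq (k : ℕ) (hk : 2 ≤ k) (w : ℕ → Step) (i : ℕ) :
    fav k w i =
      (if i = 0 then 0 else gval (w (i - 1))) - (if i = k - 1 then 0 else gval (w i)) := by
  have h01 : (0 : ℕ) ≠ k - 1 := by omega
  by_cases h0 : i = 0 <;> by_cases h1 : i = k - 1 <;>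
    rcases hw0 : w (i - 1) <;> rcases hw1 : w i <;>
      simp_all [fav, IsGenBox, IsAntigenBox, gval]

lemma sum_tele (k : ℕ) (w : ℕ → Step) (a : ℕ) :
    ∀ b, a ≤ b → b ≤ k - 1 →
    ∑ i ∈ Finset.Icc a b,
        ((if i = 0 then 0 else gval (w (i - 1))) - (if i = k - 1 then 0 else gval (w i)))
      = (if a = 0 then 0 else gval (w (a - 1))) - (if b = k - 1 then 0 else gval (w b)) := by
  intro b
  induction b with
  | zero =>
    intro h1 _
    interval_cases a
    simp
  | succ b ih =>
    intro h1 h2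
    by_cases hab : a = b + 1
    · subst hab; simp
    · have ha : a ≤ b := by omega
      have hb : b ≤ k - 1 := by omega
      have hbne : b ≠ k - 1 := by omega
      rw [Finset.sum_Icc_succ_top (by omega : a ≤ b + 1), ih ha hb]
      have : b + 1 ≠ 0 := by omega
      simp only [this, if_neg, hbne, Nat.succ_sub_one]
      simp only [if_false]
      ring

/-- Let `S = {a, …, b}` be a proper nonempty interval of boxes of a stair
with `k ≥ 2` boxes which is a submodule substair.  Then the favorite condition sums over `S`
to the number of internal endpoints of `S`: `1` if exactly one of `a > 0` and `b < k-1` holds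
and `2` if both hold. -/
theorem stmt12 (k : ℕ) (hk : 2 ≤ k) (w : ℕ → Step) (a b : ℕ)
    (hab : a ≤ b) (hbk : b ≤ k - 1)
    (hsub : IsSubmoduleSubstair k w (Finset.Icc a b))
    (hproper : ¬(a = 0 ∧ b = k - 1)) :
    ∑ i ∈ Finset.Icc a b, fav k w i =
      (if 0 < a then 1 else 0) + (if b < k - 1 then 1 else 0) := by
  have hsum : ∑ i ∈ Finset.Icc a b, fav k w i
      = (if a = 0 then 0 else gval (w (a - 1))) - (if b = k - 1 then 0 else gval (w b)) := by
    rw [Finset.sum_congr rfl (fun i _ => fav_eq k hk w i)]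
    exact sum_tele k w a b hab hbk
  rw [hsum]
  -- if a > 0 then w (a-1) = right
  have hwa : a ≠ 0 → w (a - 1) = Step.right := by
    intro ha0
    have hlt : a - 1 < k - 1 := by omega
    have := (hsub.2 (a - 1) hlt).2
    rcases hwv : w (a - 1) with _ | _
    · rfl
    · exfalso
      have hmem : a - 1 + 1 ∈ Finset.Icc a b := by
        rw [Finset.mem_Icc]; omega
      have := this hmem hwv
      rw [Finset.mem_Icc] at this
      omega
  -- if b < k - 1 then w b = down
  have hwb : b ≠ k - 1 → w b = Step.down := by
    intro hb0
    have hlt : b < k - 1 := by omega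
    have := (hsub.2 b hlt).1
    rcases hwv : w b with _ | _
    · exfalso
      have hmem : b ∈ Finset.Icc a b := by rw [Finset.mem_Icc]; omega
      have := this hmem hwv
      rw [Finset.mem_Icc] at this
      omega
    · rfl
  by_cases ha : a = 0 <;> by_cases hb : b = k - 1
  · exact absurd ⟨ha, hb⟩ hproper
  · simp [ha, hb, hwb hb, gval, show ¬ 0 < a by omega, show b < k - 1 by omega]
  · simp [ha, hb, hwa ha, gval, show 0 < a by omega, show ¬ b < k - 1 by omega]
  · simp [ha, hb, hwa ha, hwb hb, gval, show 0 < a by omega, show b < k - 1 by omega]
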